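/- Let F(z) = a₋₁ z^{−α} + a₀ + Σ_{i=1}^N a_i z^{α_i} with α ∈ (0,1), 0 < α₁ < ⋯ < α_N, nonnegative coefficients bounded above by a^*, and set s = α_N + 2. Then for all x, y ∈ ℝ^d: |F(|x|)x − F(|y|)y| ≤ C₁ (1 + |x| + |y|)^{s−2+α} |x − y|^{1−α}, where C₁ = 2(s−1)/(1−α) times a constant depending only on N and a^*. -/

import Mathlib

open Real

lemma rpow_neg_mul_self {α t : ℝ} (ht : 0 < t) : t ^ (-α) * t = t ^ (1 - α) := by
  rw [show (1-α : ℝ) = -α + 1 by ring, Real.rpow_add ht, Real.rpow_one]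

-- key scalar lemma for negative exponent
lemma key_neg {α t r : ℝ} (hα0 : 0 < α) (hα1 : α < 1) (ht : 0 < t) (htr : t ≤ r) :
    (t ^ (-α) - r ^ (-α)) * t ≤ (r - t) ^ (1 - α) := by
  have hr : 0 < r := lt_of_lt_of_le ht htr
  have hu0 : 0 ≤ r - t := by linarith
  rcases le_or_gt t (r - t) with h | h
  · -- drop r^(-α), bound by t^(1-α) ≤ (r-t)^(1-α)
    have h1 : (t ^ (-α) - r ^ (-α)) * t ≤ t ^ (-α) * t := by
      have := Real.rpow_nonneg hr.le (-α)
      nlinarith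
    calc (t ^ (-α) - r ^ (-α)) * t ≤ t ^ (1 - α) := by rw [← rpow_neg_mul_self ht]; exact h1
      _ ≤ (r - t) ^ (1 - α) := Real.rpow_le_rpow ht.le h (by linarith)
  · rcases eq_or_lt_of_le hu0 with h0 | hu
    · -- r = t
      have : r = t := by linarith
      subst this
      simp
      positivity
    · -- 0 < u < t
      -- (t/r) ≤ (t/r)^α  gives  t^(2-α)/r ≤ r^(-α) * t
      have hv1 : t / r ≤ 1 := div_le_one_of_le₀ htr hr.le
      have hv0 : 0 < t / r := div_pos ht hr
      have hb : (t / r) ≤ (t / r) ^ α := by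
        calc (t/r) = (t/r) ^ (1:ℝ) := (Real.rpow_one _).symm
          _ ≤ (t/r) ^ α := Real.rpow_le_rpow_of_exponent_ge hv0 hv1 hα1.le
      have hdr : (t / r) ^ α = t ^ α * r ^ (-α) := by
        rw [Real.div_rpow ht.le hr.le, Real.rpow_neg hr.le, div_eq_mul_inv]
      have hkey : t ^ (1 - α) * (t / r) ≤ r ^ (-α) * t := by
        have h2 : t ^ (1 - α) * (t/r) ≤ t ^ (1-α) * (t ^ α * r ^ (-α)) := by
          rw [hdr] at hb
          exact mul_le_mul_of_nonneg_left hb (Real.rpow_nonneg ht.le _)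
        have h3 : t ^ (1-α) * t ^ α = t := by
          rw [← Real.rpow_add ht]; norm_num
        calc t ^ (1-α) * (t/r) ≤ t ^ (1-α) * (t ^ α * r ^ (-α)) := h2
          _ = (t ^ (1-α) * t ^ α) * r ^ (-α) := by ring
          _ = r ^ (-α) * t := by rw [h3]; ring
      -- LHS = t^(1-α) - r^(-α)*t ≤ t^(1-α)(1 - t/r) = t^(1-α)*(r-t)/r
      have hL : (t ^ (-α) - r ^ (-α)) * t ≤ t ^ (1 - α) * ((r - t)/r) := by
        have := rpow_neg_mul_self (α := α) ht
        have hexp : t ^ (1-α) * ((r-t)/r) = t ^ (1-α) - t ^ (1-α) * (t/r) := by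
          field_simp
        nlinarith
      -- and t^(1-α)*(r-t)/r ≤ (r-t)^(1-α) since t/r ≤ 1 and t^(-α) ≤ (r-t)^(-α)
      have hfin : t ^ (1 - α) * ((r - t)/r) ≤ (r - t) ^ (1 - α) := by
        have h4 : t ^ (-α) ≤ (r - t) ^ (-α) :=
          Real.rpow_le_rpow_of_nonpos hu h.le (by linarith)
        have h5 : t ^ (1-α) * ((r-t)/r) = (t ^ (-α) * (r - t)) * (t / r) := by
          rw [← rpow_neg_mul_self ht]; field_simp
        have h6 : t ^ (-α) * (r - t) ≤ (r-t) ^ (-α) * (r-t) :=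
          mul_le_mul_of_nonneg_right h4 hu0
        have h7 : (r-t) ^ (-α) * (r-t) = (r-t) ^ (1-α) := rpow_neg_mul_self hu
        calc t ^ (1-α) * ((r-t)/r) = (t ^ (-α) * (r - t)) * (t/r) := h5
          _ ≤ (t ^ (-α) * (r - t)) * 1 := by
              apply mul_le_mul_of_nonneg_left hv1
              positivity
          _ = t ^ (-α) * (r - t) := by ring
          _ ≤ (r-t) ^ (1-α) := by rw [← h7]; exact h6
      linarith

-- 1 - v^e ≤ (1+e)(1-v) for v ∈ [0,1], e > 0
lemma one_sub_rpow_le {v e : ℝ} (hv0 : 0 ≤ v) (hv1 : v ≤ 1) (he : 0 < e) :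
    1 - v ^ e ≤ (1 + e) * (1 - v) := by
  rcases le_or_gt e 1 with h1 | h1
  · have : v ≤ v ^ e := by
      rcases eq_or_lt_of_le hv0 with h0 | h0
      · rw [← h0, Real.zero_rpow he.ne']
      · calc v = v ^ (1:ℝ) := (Real.rpow_one v).symm
          _ ≤ v ^ e := Real.rpow_le_rpow_of_exponent_ge h0 hv1 h1
    nlinarith
  · have hb : 1 + e * (v - 1) ≤ (1 + (v - 1)) ^ e :=
      one_add_mul_self_le_rpow_one_add (by linarith) h1.le
    have : (1 + (v-1) : ℝ) = v := by ring
    rw [this] at hb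
    nlinarith

lemma key_pos {e t r : ℝ} (he : 0 < e) (ht : 0 ≤ t) (htr : t ≤ r) :
    (r ^ e - t ^ e) * t ≤ (1 + e) * r ^ e * (r - t) := by
  rcases eq_or_lt_of_le (le_trans ht htr) with h0 | hr
  · have : r = 0 := h0.symm
    have : t = 0 := le_antisymm (this ▸ htr) ht
    simp [this, ← h0]
  · have hv0 : 0 ≤ t / r := div_nonneg ht hr.le
    have hv1 : t / r ≤ 1 := div_le_one_of_le₀ htr hr.le
    have hkey := one_sub_rpow_le hv0 hv1 he
    have hte : t ^ e = (t/r) ^ e * r ^ e := by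
      rw [← Real.mul_rpow hv0 hr.le]
      field_simp
    have hre : 0 ≤ r ^ e := Real.rpow_nonneg hr.le e
    have h2 : (r ^ e - t ^ e) = r ^ e * (1 - (t/r) ^ e) := by rw [hte]; ring
    have h3 : r ^ e * (1 - (t/r)^e) * t ≤ r ^ e * ((1+e)*(1 - t/r)) * t := by
      apply mul_le_mul_of_nonneg_right _ ht
      exact mul_le_mul_of_nonneg_left hkey hre
    have h4 : r ^ e * ((1+e)*(1 - t/r)) * t ≤ (1 + e) * r ^ e * (r - t) := by
      have : (1 - t/r) = (r - t)/r := by field_simp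
      rw [this]
      have h5 : (r - t) / r * t ≤ (r - t) := by
        rw [div_mul_eq_mul_div, div_le_iff₀ hr]
        nlinarith
      calc r ^ e * ((1+e) * ((r-t)/r)) * t = r ^ e * ((1+e) * ((r-t)/r*t)) := by ring
        _ ≤ r ^ e * ((1+e)*(r-t)) := by
            apply mul_le_mul_of_nonneg_left _ hre
            apply mul_le_mul_of_nonneg_left h5 (by linarith)
        _ = (1+e) * r ^ e * (r - t) := by ring
    rw [h2]
    exact le_trans h3 h4

variable {E : Type*} [NormedAddCommGroup E] [NormedSpace ℝ E]

lemma holder_neg_aux {α : ℝ} (hα0 : 0 < α) (hα1 : α < 1) (x y : E) (hle : ‖y‖ ≤ ‖x‖) :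
    ‖(‖x‖ ^ (-α)) • x - (‖y‖ ^ (-α)) • y‖ ≤ 2 * ‖x - y‖ ^ (1 - α) := by
  have h1α : (0:ℝ) < 1 - α := by linarith
  by_cases hxy : x = y
  · simp [hxy, Real.zero_rpow h1α.ne']
  have hD : 0 < ‖x - y‖ := by rwa [norm_pos_iff, sub_ne_zero]
  have hDpow : 0 ≤ ‖x - y‖ ^ (1 - α) := Real.rpow_nonneg hD.le _
  by_cases hx : x = 0
  · have : y = 0 := by
      have := hle; rw [hx, norm_zero] at this
      exact norm_eq_zero.mp (le_antisymm this (norm_nonneg y))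
    exact absurd (this ▸ hx) hxy
  have hr : 0 < ‖x‖ := norm_pos_iff.mpr hx
  have hsm : ∀ z : E, ‖(‖z‖ ^ (-α)) • z‖ = ‖z‖ ^ (1 - α) := by
    intro z
    rcases eq_or_ne z 0 with rfl | hz
    · simp [Real.zero_rpow h1α.ne', Real.zero_rpow (by linarith : -α ≠ 0)]
    · rw [norm_smul, Real.norm_rpow_of_nonneg (norm_nonneg z), Real.norm_eq_abs,
        abs_of_nonneg (norm_nonneg z), rpow_neg_mul_self (norm_pos_iff.mpr hz)]
  by_cases hy : y = 0
  · rw [hy, smul_zero, sub_zero, hsm x, sub_zero]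
    nlinarith [Real.rpow_nonneg (norm_nonneg x) (1-α)]
  have ht : 0 < ‖y‖ := norm_pos_iff.mpr hy
  rcases le_or_gt ‖x‖ ‖x - y‖ with h | h
  · -- big difference case
    calc ‖(‖x‖ ^ (-α)) • x - (‖y‖ ^ (-α)) • y‖ ≤ ‖(‖x‖ ^ (-α)) • x‖ + ‖(‖y‖ ^ (-α)) • y‖ :=
          norm_sub_le _ _
      _ = ‖x‖ ^ (1-α) + ‖y‖ ^ (1-α) := by rw [hsm, hsm]
      _ ≤ ‖x - y‖ ^ (1-α) + ‖x - y‖ ^ (1-α) := by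
          have h1 := Real.rpow_le_rpow (norm_nonneg x) h h1α.le
          have h2 := Real.rpow_le_rpow (norm_nonneg y) (le_trans hle h) h1α.le
          linarith
      _ = 2 * ‖x - y‖ ^ (1-α) := by ring
  · -- small difference case
    have hdecomp : (‖x‖ ^ (-α)) • x - (‖y‖ ^ (-α)) • y
        = (‖x‖ ^ (-α)) • (x - y) + (‖x‖ ^ (-α) - ‖y‖ ^ (-α)) • y := by
      rw [smul_sub, sub_smul]; abel
    have hterm1 : ‖(‖x‖ ^ (-α)) • (x - y)‖ ≤ ‖x - y‖ ^ (1 - α) := by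
      rw [norm_smul, Real.norm_rpow_of_nonneg (norm_nonneg x), Real.norm_eq_abs,
        abs_of_nonneg (norm_nonneg x)]
      calc ‖x‖ ^ (-α) * ‖x - y‖ ≤ ‖x - y‖ ^ (-α) * ‖x - y‖ := by
            apply mul_le_mul_of_nonneg_right _ (norm_nonneg _)
            exact Real.rpow_le_rpow_of_nonpos hD h.le (by linarith)
        _ = ‖x - y‖ ^ (1 - α) := rpow_neg_mul_self hD
    have hterm2 : ‖(‖x‖ ^ (-α) - ‖y‖ ^ (-α)) • y‖ ≤ ‖x - y‖ ^ (1 - α) := by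
      rw [norm_smul, Real.norm_eq_abs]
      have hanti : ‖x‖ ^ (-α) ≤ ‖y‖ ^ (-α) :=
        Real.rpow_le_rpow_of_nonpos ht hle (by linarith)
      rw [abs_of_nonpos (by linarith)]
      have hk := key_neg hα0 hα1 ht hle
      have hnn : ‖x‖ - ‖y‖ ≤ ‖x - y‖ := by
        have := norm_sub_norm_le x y
        linarith
      calc -(‖x‖ ^ (-α) - ‖y‖ ^ (-α)) * ‖y‖ = (‖y‖ ^ (-α) - ‖x‖ ^ (-α)) * ‖y‖ := by ring
        _ ≤ (‖x‖ - ‖y‖) ^ (1 - α) := hk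
        _ ≤ ‖x - y‖ ^ (1 - α) := by
            apply Real.rpow_le_rpow _ hnn h1α.le
            linarith
    calc ‖(‖x‖ ^ (-α)) • x - (‖y‖ ^ (-α)) • y‖
        ≤ ‖(‖x‖ ^ (-α)) • (x - y)‖ + ‖(‖x‖ ^ (-α) - ‖y‖ ^ (-α)) • y‖ := by
          rw [hdecomp]; exact norm_add_le _ _
      _ ≤ 2 * ‖x - y‖ ^ (1-α) := by linarith

lemma holder_neg {α : ℝ} (hα0 : 0 < α) (hα1 : α < 1) (x y : E) :
    ‖(‖x‖ ^ (-α)) • x - (‖y‖ ^ (-α)) • y‖ ≤ 2 * ‖x - y‖ ^ (1 - α) := by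
  rcases le_total ‖y‖ ‖x‖ with h | h
  · exact holder_neg_aux hα0 hα1 x y h
  · rw [← norm_neg, neg_sub, ← norm_neg (x - y), neg_sub]
    exact holder_neg_aux hα0 hα1 y x h

lemma lip_pos_aux {e : ℝ} (he : 0 < e) (x y : E) (hle : ‖y‖ ≤ ‖x‖) :
    ‖(‖x‖ ^ e) • x - (‖y‖ ^ e) • y‖ ≤ (2 + e) * (1 + ‖x‖ + ‖y‖) ^ e * ‖x - y‖ := by
  set M : ℝ := 1 + ‖x‖ + ‖y‖ with hM
  have hM1 : (1:ℝ) ≤ M := by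
    have := norm_nonneg x; have := norm_nonneg y; simp only [hM]; linarith
  have hMpos : (0:ℝ) < M := by linarith
  have hrM : ‖x‖ ≤ M := by
    have := norm_nonneg y; simp [hM]; linarith
  have hMe : ‖x‖ ^ e ≤ M ^ e := Real.rpow_le_rpow (norm_nonneg x) hrM he.le
  have hMe0 : 0 ≤ M ^ e := Real.rpow_nonneg hMpos.le e
  have hdecomp : (‖x‖ ^ e) • x - (‖y‖ ^ e) • y
      = (‖x‖ ^ e) • (x - y) + (‖x‖ ^ e - ‖y‖ ^ e) • y := by
    rw [smul_sub, sub_smul]; abel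
  have hterm1 : ‖(‖x‖ ^ e) • (x - y)‖ ≤ M ^ e * ‖x - y‖ := by
    rw [norm_smul, Real.norm_eq_abs, abs_of_nonneg (Real.rpow_nonneg (norm_nonneg x) e)]
    exact mul_le_mul_of_nonneg_right hMe (norm_nonneg _)
  have hterm2 : ‖(‖x‖ ^ e - ‖y‖ ^ e) • y‖ ≤ (1 + e) * M ^ e * ‖x - y‖ := by
    rw [norm_smul, Real.norm_eq_abs]
    have hmono : ‖y‖ ^ e ≤ ‖x‖ ^ e := Real.rpow_le_rpow (norm_nonneg y) hle he.le
    rw [abs_of_nonneg (by linarith)]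
    have hk := key_pos he (norm_nonneg y) hle
    have hnn : ‖x‖ - ‖y‖ ≤ ‖x - y‖ := by
      have := norm_sub_norm_le x y; linarith
    calc (‖x‖ ^ e - ‖y‖ ^ e) * ‖y‖ ≤ (1 + e) * ‖x‖ ^ e * (‖x‖ - ‖y‖) := hk
      _ ≤ (1 + e) * M ^ e * ‖x - y‖ := by
          apply mul_le_mul _ hnn (by linarith) (by positivity)
          apply mul_le_mul_of_nonneg_left hMe (by linarith)
  calc ‖(‖x‖ ^ e) • x - (‖y‖ ^ e) • y‖
      ≤ ‖(‖x‖ ^ e) • (x - y)‖ + ‖(‖x‖ ^ e - ‖y‖ ^ e) • y‖ := by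
        rw [hdecomp]; exact norm_add_le _ _
    _ ≤ M ^ e * ‖x - y‖ + (1 + e) * M ^ e * ‖x - y‖ := by linarith
    _ = (2 + e) * M ^ e * ‖x - y‖ := by ring

lemma lip_pos {e : ℝ} (he : 0 < e) (x y : E) :
    ‖(‖x‖ ^ e) • x - (‖y‖ ^ e) • y‖ ≤ (2 + e) * (1 + ‖x‖ + ‖y‖) ^ e * ‖x - y‖ := by
  rcases le_total ‖y‖ ‖x‖ with h | h
  · exact lip_pos_aux he x y h
  · rw [← norm_neg, neg_sub, ← norm_neg (x - y), neg_sub]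
    have := lip_pos_aux he y x h
    calc ‖(‖y‖ ^ e) • y - (‖x‖ ^ e) • x‖ ≤ (2 + e) * (1 + ‖y‖ + ‖x‖) ^ e * ‖y - x‖ := this
      _ = (2 + e) * (1 + ‖x‖ + ‖y‖) ^ e * ‖y - x‖ := by rw [show 1+‖y‖+‖x‖ = 1+‖x‖+‖y‖ by ring]

theorem stmt10 (d : ℕ) (hd : 1 ≤ d) (N : ℕ) (hN : 1 ≤ N)
    (α : ℝ) (hα0 : 0 < α) (hα1 : α < 1)
    (e : Fin N → ℝ) (hmono : StrictMono e) (hepos : ∀ i, 0 < e i)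
    (astar asup : ℝ) (hstar : 0 < astar) (hstarsup : astar ≤ asup)
    (s : ℝ) (hs : s = e ⟨N - 1, by omega⟩ + 2) :
    ∃ K : ℝ, 0 < K ∧
      ∀ (am1 a0 : ℝ) (a : Fin N → ℝ),
        astar ≤ am1 → am1 ≤ asup → astar ≤ a0 → a0 ≤ asup →
        astar ≤ a ⟨N - 1, by omega⟩ → (∀ i, 0 ≤ a i ∧ a i ≤ asup) →
        ∀ x y : EuclideanSpace ℝ (Fin d),
          ‖(am1 * ‖x‖ ^ (-α) + a0 + ∑ i, a i * ‖x‖ ^ (e i)) • x -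
              (am1 * ‖y‖ ^ (-α) + a0 + ∑ i, a i * ‖y‖ ^ (e i)) • y‖ ≤
            2 * (s - 1) / (1 - α) * K * (1 + ‖x‖ + ‖y‖) ^ (s - 2 + α) *
              ‖x - y‖ ^ (1 - α) := by
  have hasup : 0 < asup := lt_of_lt_of_le hstar hstarsup
  set i0 : Fin N := ⟨N - 1, by omega⟩ with hi0
  have hL : 0 < e i0 := hepos i0
  have hs2 : s - 2 = e i0 := by rw [hs]; ring
  have hs1 : 0 < s - 1 := by rw [hs]; linarith
  have h1α : (0:ℝ) < 1 - α := by linarith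
  have hNs : (0:ℝ) ≤ (N:ℝ) * s := by
    have : (0:ℝ) < s := by linarith
    positivity
  refine ⟨asup * (3 + (N:ℝ) * s) * (1 - α) / (2 * (s - 1)), by positivity, ?_⟩
  intro am1 a0 a ham1 ham2 ha01 ha02 haN ha x y
  have hamn : 0 ≤ am1 := le_trans hstar.le ham1
  have ha0n : 0 ≤ a0 := le_trans hstar.le ha01
  set M : ℝ := 1 + ‖x‖ + ‖y‖ with hM
  set D : ℝ := ‖x - y‖ with hD
  have hM1 : (1:ℝ) ≤ M := by
    have := norm_nonneg x; have := norm_nonneg y; simp only [hM]; linarith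
  have hMpos : (0:ℝ) < M := by linarith
  have hDM : D ≤ M := by
    have := norm_sub_le x y
    have := norm_nonneg x; have := norm_nonneg y
    simp only [hD, hM]; linarith
  have hD0 : 0 ≤ D := norm_nonneg _
  have hDp : 0 ≤ D ^ (1 - α) := Real.rpow_nonneg hD0 _
  have hMsa : 0 ≤ M ^ (s - 2 + α) := Real.rpow_nonneg hMpos.le _
  have hMsa1 : (1:ℝ) ≤ M ^ (s - 2 + α) :=
    Real.one_le_rpow hM1 (by rw [hs]; linarith)
  -- D ≤ M^α * D^(1-α)
  have hDsplit : D ≤ M ^ α * D ^ (1 - α) := by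
    rcases eq_or_lt_of_le hD0 with h0 | h0
    · rw [← h0, Real.zero_rpow h1α.ne']
      simp
    · have h1 : D = D ^ α * D ^ (1 - α) := by
        rw [← Real.rpow_add h0]; norm_num
      have h2 : D ^ α ≤ M ^ α := Real.rpow_le_rpow hD0 hDM hα0.le
      calc D = D ^ α * D ^ (1-α) := h1
        _ ≤ M ^ α * D ^ (1-α) := mul_le_mul_of_nonneg_right h2 hDp
  -- exponent comparisons
  have hMα : M ^ α ≤ M ^ (s - 2 + α) :=
    Real.rpow_le_rpow_of_exponent_le hM1 (by rw [hs]; linarith)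
  have hMrw : M ^ (s - 2) * M ^ α = M ^ (s - 2 + α) := (Real.rpow_add hMpos _ _).symm
  -- vector decomposition
  have hvec : (am1 * ‖x‖ ^ (-α) + a0 + ∑ i, a i * ‖x‖ ^ (e i)) • x -
      (am1 * ‖y‖ ^ (-α) + a0 + ∑ i, a i * ‖y‖ ^ (e i)) • y
    = am1 • ((‖x‖ ^ (-α)) • x - (‖y‖ ^ (-α)) • y) + a0 • (x - y)
      + ∑ i, a i • ((‖x‖ ^ (e i)) • x - (‖y‖ ^ (e i)) • y) := by
    simp only [add_smul, Finset.sum_smul, mul_smul, smul_sub, Finset.sum_sub_distrib]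
    abel
  -- triangle inequality
  have hnorm : ‖(am1 * ‖x‖ ^ (-α) + a0 + ∑ i, a i * ‖x‖ ^ (e i)) • x -
      (am1 * ‖y‖ ^ (-α) + a0 + ∑ i, a i * ‖y‖ ^ (e i)) • y‖
      ≤ am1 * ‖(‖x‖ ^ (-α)) • x - (‖y‖ ^ (-α)) • y‖ + a0 * D
        + ∑ i, a i * ‖(‖x‖ ^ (e i)) • x - (‖y‖ ^ (e i)) • y‖ := by
    rw [hvec]
    refine le_trans (norm_add_le _ _) ?_
    gcongr
    · refine le_trans (norm_add_le _ _) ?_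
      gcongr
      · rw [norm_smul, Real.norm_eq_abs, abs_of_nonneg hamn]
      · rw [norm_smul, Real.norm_eq_abs, abs_of_nonneg ha0n]
    · refine le_trans (norm_sum_le _ _) ?_
      apply Finset.sum_le_sum
      intro i _
      rw [norm_smul, Real.norm_eq_abs, abs_of_nonneg (ha i).1]
  -- per-term bounds
  have b1 : am1 * ‖(‖x‖ ^ (-α)) • x - (‖y‖ ^ (-α)) • y‖
      ≤ 2 * asup * (M ^ (s - 2 + α) * D ^ (1 - α)) := by
    have h1 := holder_neg hα0 hα1 x y
    calc am1 * ‖(‖x‖ ^ (-α)) • x - (‖y‖ ^ (-α)) • y‖ ≤ asup * (2 * D ^ (1-α)) := by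
          apply mul_le_mul ham2 h1 (norm_nonneg _) hasup.le
      _ = 2 * asup * (1 * D ^ (1-α)) := by ring
      _ ≤ 2 * asup * (M ^ (s - 2 + α) * D ^ (1-α)) := by
          apply mul_le_mul_of_nonneg_left _ (by linarith)
          exact mul_le_mul_of_nonneg_right hMsa1 hDp
  have b2 : a0 * D ≤ asup * (M ^ (s - 2 + α) * D ^ (1 - α)) := by
    calc a0 * D ≤ asup * (M ^ α * D ^ (1-α)) := by
          apply mul_le_mul ha02 hDsplit hD0 hasup.le
      _ ≤ asup * (M ^ (s - 2 + α) * D ^ (1-α)) := by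
          apply mul_le_mul_of_nonneg_left _ hasup.le
          exact mul_le_mul_of_nonneg_right hMα hDp
  have b3 : ∀ i : Fin N, a i * ‖(‖x‖ ^ (e i)) • x - (‖y‖ ^ (e i)) • y‖
      ≤ asup * s * (M ^ (s - 2 + α) * D ^ (1 - α)) := by
    intro i
    have hiL : e i ≤ e i0 := by
      apply hmono.monotone
      simp only [hi0, Fin.le_def]
      omega
    have h1 := lip_pos (hepos i) x y
    have hMei : M ^ (e i) ≤ M ^ (s - 2) :=
      Real.rpow_le_rpow_of_exponent_le hM1 (by rw [hs2]; exact hiL)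
    have hMee : 0 ≤ M ^ (e i) := Real.rpow_nonneg hMpos.le _
    have hMs2 : 0 ≤ M ^ (s - 2) := Real.rpow_nonneg hMpos.le _
    have h2ei : 2 + e i ≤ s := by rw [hs]; linarith
    have h2ei0 : 0 ≤ 2 + e i := by have := (hepos i).le; linarith
    calc a i * ‖(‖x‖ ^ (e i)) • x - (‖y‖ ^ (e i)) • y‖
        ≤ asup * ((2 + e i) * M ^ (e i) * D) := by
          apply mul_le_mul (ha i).2 h1 (norm_nonneg _) hasup.le
      _ ≤ asup * (s * M ^ (s-2) * (M ^ α * D ^ (1-α))) := by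
          apply mul_le_mul_of_nonneg_left _ hasup.le
          apply mul_le_mul _ hDsplit hD0 (mul_nonneg (by linarith : (0:ℝ) ≤ s) hMs2)
          apply mul_le_mul h2ei hMei hMee (by linarith)
      _ = asup * s * (M ^ (s - 2 + α) * D ^ (1-α)) := by
          rw [← hMrw]; ring
  have bsum : ∑ i, a i * ‖(‖x‖ ^ (e i)) • x - (‖y‖ ^ (e i)) • y‖
      ≤ (N:ℝ) * (asup * s * (M ^ (s - 2 + α) * D ^ (1 - α))) := by
    calc ∑ i, a i * ‖(‖x‖ ^ (e i)) • x - (‖y‖ ^ (e i)) • y‖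
        ≤ ∑ _i : Fin N, asup * s * (M ^ (s - 2 + α) * D ^ (1 - α)) :=
          Finset.sum_le_sum fun i _ => b3 i
      _ = (N:ℝ) * (asup * s * (M ^ (s - 2 + α) * D ^ (1 - α))) := by
          rw [Finset.sum_const, Finset.card_univ, Fintype.card_fin, nsmul_eq_mul]
  have hconst : 2 * (s - 1) / (1 - α) * (asup * (3 + (N:ℝ) * s) * (1 - α) / (2 * (s - 1)))
      = asup * (3 + (N:ℝ) * s) := by
    field_simp
  calc ‖(am1 * ‖x‖ ^ (-α) + a0 + ∑ i, a i * ‖x‖ ^ (e i)) • x -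
      (am1 * ‖y‖ ^ (-α) + a0 + ∑ i, a i * ‖y‖ ^ (e i)) • y‖
      ≤ am1 * ‖(‖x‖ ^ (-α)) • x - (‖y‖ ^ (-α)) • y‖ + a0 * D
        + ∑ i, a i * ‖(‖x‖ ^ (e i)) • x - (‖y‖ ^ (e i)) • y‖ := hnorm
    _ ≤ 2 * asup * (M ^ (s - 2 + α) * D ^ (1 - α)) + asup * (M ^ (s - 2 + α) * D ^ (1 - α))
        + (N:ℝ) * (asup * s * (M ^ (s - 2 + α) * D ^ (1 - α))) := by
        gcongr
    _ = asup * (3 + (N:ℝ) * s) * (M ^ (s - 2 + α) * D ^ (1 - α)) := by ring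
    _ = 2 * (s - 1) / (1 - α) * (asup * (3 + (N:ℝ) * s) * (1 - α) / (2 * (s - 1)))
        * M ^ (s - 2 + α) * D ^ (1 - α) := by rw [hconst]; ring
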